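/- With U and V as defined, for every real x satisfying M ≤ x < M+1 with M ≥ 1 an integer, and every 1 ≤ n ≤ M-1 and k ≥ 0, one has U(x;n,k) + V(x;n,k) ≥ 0. -/

import Mathlib

noncomputable def U (x n : ℝ) (k : ℕ) : ℝ :=
  (Real.log (x / n)) ^ (2 * k) / (Nat.factorial (2 * k) * Real.sqrt n)
    - (Real.sqrt n / 2) *
      ((Real.log (x / n)) ^ (2 * k + 2) / (Nat.factorial (2 * k + 2))
        + 2 * (Real.log (x / n)) ^ (2 * k + 1) / (Nat.factorial (2 * k + 1)))

noncomputable def V (x n : ℝ) (k : ℕ) : ℝ :=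
  (Real.sqrt (n + 1) / 2) *
      ((Real.log (x / (n + 1))) ^ (2 * k + 2) / (Nat.factorial (2 * k + 2))
        + 2 * (Real.log (x / (n + 1))) ^ (2 * k + 1) / (Nat.factorial (2 * k + 1)))
    - (Real.log (x / (n + 1))) ^ (2 * k + 2) / (Nat.factorial (2 * k + 2) * 4 * Real.sqrt (n + 1))

lemma hasDerivAt_L (x : ℝ) (hx : 0 < x) (z : ℝ) (hz : 0 < z) :
    HasDerivAt (fun z => Real.log (x / z)) (-z⁻¹) z := by
  have h1 : HasDerivAt (fun z : ℝ => x / z) (x * -(z ^ 2)⁻¹) z := by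
    simpa [div_eq_mul_inv] using (hasDerivAt_inv hz.ne').const_mul x
  have h2 := h1.log (by positivity : x / z ≠ 0)
  convert h2 using 1
  field_simp

lemma hasDerivAt_g (x : ℝ) (hx : 0 < x) (p : ℕ) (z : ℝ) (hz : 0 < z) :
    HasDerivAt (fun z => Real.sqrt z / 2 *
        ((Real.log (x / z)) ^ (p + 2) / (Nat.factorial (p + 2) : ℝ)
          + 2 * (Real.log (x / z)) ^ (p + 1) / (Nat.factorial (p + 1) : ℝ)))
      ((Real.log (x / z)) ^ (p + 2) / (Nat.factorial (p + 2) * 4 * Real.sqrt z)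
        - (Real.log (x / z)) ^ p / (Nat.factorial p * Real.sqrt z)) z := by
  have hL := hasDerivAt_L x hx z hz
  have hs := (Real.hasDerivAt_sqrt hz.ne').div_const 2
  have h2 := (hL.pow (p + 2)).div_const (Nat.factorial (p + 2) : ℝ)
  have h3 := ((hL.pow (p + 1)).const_mul 2).div_const (Nat.factorial (p + 1) : ℝ)
  have h := hs.mul (h2.add h3)
  convert h using 1
  · rfl
  · rfl
  · rfl
  simp only [Pi.add_apply, Pi.pow_apply, show p + 2 - 1 = p + 1 by omega, show p + 1 - 1 = p by omega]
  push_cast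
  set L := Real.log (x / z)
  set s := Real.sqrt z with hsdef
  have hs0 : s ≠ 0 := ne_of_gt (Real.sqrt_pos.mpr hz)
  have hz2 : z = s ^ 2 := (Real.sq_sqrt hz.le).symm
  have hf2 : (Nat.factorial (p + 2) : ℝ) = (p + 2) * Nat.factorial (p + 1) := by
    push_cast [Nat.factorial_succ]; ring
  have hf1 : (Nat.factorial (p + 1) : ℝ) = (p + 1) * Nat.factorial p := by
    push_cast [Nat.factorial_succ]; ring
  have hfp : (Nat.factorial p : ℝ) ≠ 0 := by positivity
  rw [hz2, hf2, hf1]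
  have hp1 : ((p:ℝ) + 1) ≠ 0 := by positivity
  have hp2 : ((p:ℝ) + 2) ≠ 0 := by positivity
  field_simp
  ring

theorem stmt_8 (M : ℕ) (hM : 1 ≤ M) (x : ℝ) (hx1 : (M : ℝ) ≤ x) (hx2 : x < M + 1)
    (n : ℕ) (hn1 : 1 ≤ n) (hn2 : n ≤ M - 1) (k : ℕ) :
    U x n k + V x n k ≥ 0 := by
  have hnM : n + 1 ≤ M := by omega
  have hn0 : (0:ℝ) < n := by exact_mod_cast hn1
  have hxn1 : (n:ℝ) + 1 ≤ x := le_trans (by exact_mod_cast hnM) hx1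
  have hx0 : (0:ℝ) < x := lt_of_lt_of_le (by positivity) hxn1
  set g : ℝ → ℝ := fun z => Real.sqrt z / 2 *
        ((Real.log (x / z)) ^ (2 * k + 2) / (Nat.factorial (2 * k + 2) : ℝ)
          + 2 * (Real.log (x / z)) ^ (2 * k + 1) / (Nat.factorial (2 * k + 1) : ℝ)) with hg
  set f : ℝ → ℝ := fun z =>
      (Real.log (x / z)) ^ (2 * k) / (Nat.factorial (2 * k) * Real.sqrt z) with hf
  set q : ℝ → ℝ := fun z =>
      (Real.log (x / z)) ^ (2 * k + 2) / (Nat.factorial (2 * k + 2) * 4 * Real.sqrt z) with hq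
  have key : ∀ z : ℝ, 0 < z → HasDerivAt g (q z - f z) z := by
    intro z hz
    exact hasDerivAt_g x hx0 (2 * k) z hz
  have hlt : (n:ℝ) < n + 1 := by linarith
  have hcont : ContinuousOn g (Set.Icc (n:ℝ) ((n:ℝ)+1)) := by
    intro z hzI
    exact ((key z (lt_of_lt_of_le hn0 hzI.1)).continuousAt).continuousWithinAt
  obtain ⟨c, hc, hceq⟩ := exists_hasDerivAt_eq_slope g (fun z => q z - f z) hlt hcont
    (fun z hz => key z (lt_trans hn0 hz.1))
  have hslope : q c - f c = g ((n:ℝ)+1) - g n := by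
    rw [hceq]; simp
  have hc1 : (n:ℝ) < c := hc.1
  have hc2 : c < (n:ℝ) + 1 := hc.2
  have hc0 : (0:ℝ) < c := lt_trans hn0 hc1
  have hcx : c ≤ x := le_trans hc2.le hxn1
  have hLc0 : 0 ≤ Real.log (x / c) := Real.log_nonneg ((one_le_div hc0).mpr hcx)
  have hLn10 : 0 ≤ Real.log (x / ((n:ℝ)+1)) :=
    Real.log_nonneg ((one_le_div (by linarith)).mpr hxn1)
  have hLn0 : 0 ≤ Real.log (x / (n:ℝ)) :=
    Real.log_nonneg ((one_le_div hn0).mpr (by linarith))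
  have hLcn : Real.log (x / c) ≤ Real.log (x / n) := by
    apply Real.log_le_log (by positivity)
    gcongr
  have hLn1c : Real.log (x / ((n:ℝ)+1)) ≤ Real.log (x / c) := by
    apply Real.log_le_log (by positivity)
    gcongr
  have hfmono : f c ≤ f n := by
    apply div_le_div₀ (by positivity) (pow_le_pow_left₀ hLc0 hLcn (2 * k))
      (by positivity) (by gcongr)
  have hqmono : q ((n:ℝ)+1) ≤ q c := by
    apply div_le_div₀ (by positivity)
      (pow_le_pow_left₀ hLn10 hLn1c (2 * k + 2)) (by positivity) (by gcongr)
  have hUV : U x n k + V x n k = f n - q ((n:ℝ)+1) + (g ((n:ℝ)+1) - g n) := by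
    simp only [U, V, hf, hg, hq]
    ring
  rw [hUV, ← hslope]
  linarith
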